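/- Let R be a (left) nearfield which is not distributive, i.e. there exist α, β, λ ∈ R with (α+β)·λ ≠ α·λ + β·λ, and let n be a positive integer and 0 ≤ k ≤ n. The number of subspaces N of R^n whose support { j ∈ {1,…,n} : there exists x ∈ N with x_j ≠ 0 } has cardinality k is exactly the binomial coefficient C(n,k). -/

import Mathlib

/-- A (left) nearfield: `(R,+)` is an abelian group, multiplication is associative
with identity `1 ≠ 0`, every nonzero element has a two-sided inverse,
`0` multiplies to `0` on both sides, and the left distributive law holds. -/
class Nearfield (R : Type*) extends AddCommGroup R, One R, Mul R where
  mul_assoc : ∀ a b c : R, a * b * c = a * (b * c)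
  one_mul : ∀ a : R, 1 * a = a
  mul_one : ∀ a : R, a * 1 = a
  one_ne_zero : (1 : R) ≠ 0
  zero_mul : ∀ a : R, 0 * a = 0
  mul_zero : ∀ a : R, a * 0 = 0
  left_distrib : ∀ a b c : R, a * (b + c) = a * b + a * c
  exists_inv : ∀ a : R, a ≠ 0 → ∃ b : R, a * b = 1 ∧ b * a = 1

variable {R : Type*} [Nearfield R] {n : ℕ}

/-- Right scalar multiplication on `R^n`: `(x · r) j = x j * r`. -/
def vsmul (x : Fin n → R) (r : R) : Fin n → R := fun j => x j * r

/-- An `R`-subgroup of `R^n`: an additive subgroup closed under right scalar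
multiplication. -/
def IsRSubgroup (S : Set (Fin n → R)) : Prop :=
  (0 : Fin n → R) ∈ S ∧ (∀ x ∈ S, ∀ y ∈ S, x + y ∈ S) ∧ (∀ x ∈ S, -x ∈ S) ∧
    ∀ x ∈ S, ∀ r : R, vsmul x r ∈ S

/-- `nvGen V` is the smallest `R`-subgroup of `R^n` containing `V`
(the intersection of all `R`-subgroups containing `V`). -/
def nvGen (V : Set (Fin n → R)) : Set (Fin n → R) :=
  { x | ∀ S : Set (Fin n → R), IsRSubgroup S → V ⊆ S → x ∈ S }

/-- A subspace of `R^n`: an additive subgroup `N` with `(x+y)·r − x·r ∈ N`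
for all `x ∈ R^n`, `y ∈ N`, `r ∈ R`. -/
def IsSubspace (N : Set (Fin n → R)) : Prop :=
  (0 : Fin n → R) ∈ N ∧ (∀ x ∈ N, ∀ y ∈ N, x + y ∈ N) ∧ (∀ x ∈ N, -x ∈ N) ∧
    ∀ x : Fin n → R, ∀ y ∈ N, ∀ r : R, vsmul (x + y) r - vsmul x r ∈ N

/-- `nvSpan V` is the smallest subspace of `R^n` containing `V`. -/
def nvSpan (V : Set (Fin n → R)) : Set (Fin n → R) :=
  { x | ∀ N : Set (Fin n → R), IsSubspace N → V ⊆ N → x ∈ N }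

/-- `nvLC V 0 = V` and `nvLC V (m+1)` is the set of all finite right `R`-linear
combinations of elements of `nvLC V m`. -/
def nvLC (V : Set (Fin n → R)) : ℕ → Set (Fin n → R)
  | 0 => V
  | m + 1 => { x | ∃ F : Finset (Fin n → R), ↑F ⊆ nvLC V m ∧
      ∃ lam : (Fin n → R) → R, x = ∑ w ∈ F, vsmul w (lam w) }


/-! ### Auxiliary machinery -/

section Aux

open Nearfield

lemma nf_mul_sub (a x y : R) : a * (x - y) = a * x - a * y := by
  have h := Nearfield.left_distrib a (x - y) y
  rw [sub_add_cancel] at h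
  exact eq_sub_of_add_eq h.symm

lemma nf_mul_cancel {d t : R} (hd : d ≠ 0) (h : d * t = 0) : t = 0 := by
  obtain ⟨b, _, hb2⟩ := Nearfield.exists_inv d hd
  have h2 : b * (d * t) = b * 0 := by rw [h]
  rw [← Nearfield.mul_assoc, hb2, Nearfield.one_mul, Nearfield.mul_zero] at h2
  exact h2

/-- The axis vector supported at `j` with value `r`. -/
def ejv (j : Fin n) (r : R) : Fin n → R := fun i => if i = j then r else 0

lemma vsmul_zero' (r : R) : vsmul (0 : Fin n → R) r = 0 := by
  funext i; simp [vsmul, Nearfield.zero_mul]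

lemma vsmul_ejv (j : Fin n) (c r : R) : vsmul (ejv j c) r = ejv j (c * r) := by
  funext i
  by_cases h : i = j <;> simp [vsmul, ejv, h, Nearfield.zero_mul, Nearfield.mul_assoc]

lemma ejv_zero (j : Fin n) : ejv j (0 : R) = 0 := by
  funext i; by_cases h : i = j <;> simp [ejv, h]

lemma IsSubspace.vsmul_mem {N : Set (Fin n → R)} (hN : IsSubspace N)
    {y : Fin n → R} (hy : y ∈ N) (r : R) : vsmul y r ∈ N := by
  have h := hN.2.2.2 0 y hy r
  rwa [zero_add, vsmul_zero', sub_zero] at h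

lemma IsSubspace.sub_mem {N : Set (Fin n → R)} (hN : IsSubspace N)
    {x y : Fin n → R} (hx : x ∈ N) (hy : y ∈ N) : x - y ∈ N := by
  rw [sub_eq_add_neg]
  exact hN.2.1 x hx (-y) (hN.2.2.1 y hy)

/-- From failure of right distributivity extract `b, lam` with
`(b+1)*lam ≠ b*lam + lam`. -/
lemma one_distrib_fail
    (hd : ∃ α β lam : R, (α + β) * lam ≠ α * lam + β * lam) :
    ∃ b lam : R, (b + 1) * lam ≠ b * lam + lam := by
  obtain ⟨α, β, lam, h⟩ := hd
  have hβ : β ≠ 0 := by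
    rintro rfl
    exact h (by rw [add_zero, Nearfield.zero_mul, add_zero])
  obtain ⟨βi, hβi1, hβi2⟩ := Nearfield.exists_inv β hβ
  refine ⟨βi * α, lam, fun heq => h ?_⟩
  have h2 : β * ((βi * α + 1) * lam) = β * ((βi * α) * lam + lam) := by rw [heq]
  rw [Nearfield.left_distrib, ← Nearfield.mul_assoc, ← Nearfield.mul_assoc,
    ← Nearfield.mul_assoc, hβi1, Nearfield.one_mul] at h2
  rw [← h2, Nearfield.left_distrib, Nearfield.mul_one, ← Nearfield.mul_assoc,
    hβi1, Nearfield.one_mul]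

/-- Key lemma: a subspace containing a vector with nonzero `j`-th coordinate
contains the whole `j`-th coordinate axis. -/
lemma axis_mem (hd : ∃ α β lam : R, (α + β) * lam ≠ α * lam + β * lam)
    {N : Set (Fin n → R)} (hN : IsSubspace N) {y : Fin n → R} (hy : y ∈ N)
    {j : Fin n} (hyj : y j ≠ 0) (r : R) : ejv j r ∈ N := by
  obtain ⟨b, lam, hbl⟩ := one_distrib_fail hd
  set d := y j with hdef
  set a := d * b with hadef
  have hz1 : vsmul (ejv j a + y) lam - vsmul (ejv j a) lam ∈ N :=
    hN.2.2.2 (ejv j a) y hy lam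
  have hz2 : vsmul y lam ∈ N := hN.vsmul_mem hy lam
  have hmem : (vsmul (ejv j a + y) lam - vsmul (ejv j a) lam) - vsmul y lam ∈ N :=
    hN.sub_mem hz1 hz2
  set c : R := (a + d) * lam - a * lam - d * lam with hcdef
  have heq : (vsmul (ejv j a + y) lam - vsmul (ejv j a) lam) - vsmul y lam = ejv j c := by
    funext i
    by_cases h : i = j
    · subst h
      simp [vsmul, ejv, hcdef, hdef]
    · simp only [vsmul, ejv, Pi.sub_apply, Pi.add_apply, if_neg h,
        Nearfield.zero_mul, zero_add, sub_zero, sub_self]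
  rw [heq] at hmem
  have hc : c ≠ 0 := by
    intro h0
    apply hbl
    have hcd : c = d * ((b + 1) * lam - (b * lam + lam)) := by
      rw [hcdef, hadef, nf_mul_sub, Nearfield.mul_assoc, Nearfield.left_distrib]
      have h1 : d * b + d = d * (b + 1) := by
        rw [Nearfield.left_distrib, Nearfield.mul_one]
      rw [h1, Nearfield.mul_assoc, sub_sub]
    rw [hcd] at h0
    have := nf_mul_cancel hyj h0
    have h3 := sub_eq_zero.mp this
    exact h3
  obtain ⟨ci, hci1, _⟩ := Nearfield.exists_inv c hc
  have := hN.vsmul_mem hmem (ci * r)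
  rwa [vsmul_ejv, ← Nearfield.mul_assoc, hci1, Nearfield.one_mul] at this

/-- The coordinate subspace supported on a finset `T`. -/
def coordSub (T : Finset (Fin n)) : Set (Fin n → R) :=
  { x | ∀ j ∉ T, x j = 0 }

lemma coordSub_isSubspace (T : Finset (Fin n)) :
    IsSubspace (coordSub T : Set (Fin n → R)) := by
  refine ⟨fun j _ => rfl, ?_, ?_, ?_⟩
  · intro x hx y hy j hj
    simp [Pi.add_apply, hx j hj, hy j hj]
  · intro x hx j hj
    simp [Pi.neg_apply, hx j hj]
  · intro x y hy r j hj
    simp [vsmul, Pi.sub_apply, Pi.add_apply, hy j hj]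

lemma ejv_mem_coordSub {T : Finset (Fin n)} {j : Fin n} (hj : j ∈ T) (r : R) :
    ejv j r ∈ (coordSub T : Set (Fin n → R)) := by
  intro i hi
  have : i ≠ j := fun h => hi (h ▸ hj)
  simp [ejv, this]

lemma support_coordSub (T : Finset (Fin n)) :
    { j : Fin n | ∃ x ∈ (coordSub T : Set (Fin n → R)), x j ≠ 0 } = ↑T := by
  ext j
  simp only [Set.mem_setOf_eq, Finset.coe_sort_coe, Finset.mem_coe]
  constructor
  · rintro ⟨x, hx, hxj⟩
    by_contra hj
    exact hxj (hx j hj)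
  · intro hj
    refine ⟨ejv j 1, ejv_mem_coordSub hj 1, ?_⟩
    simp [ejv, Nearfield.one_ne_zero]

lemma sum_mem_of_subspace {N : Set (Fin n → R)} (hN : IsSubspace N)
    {ι : Type*} (s : Finset ι) (f : ι → Fin n → R) (h : ∀ i ∈ s, f i ∈ N) :
    ∑ i ∈ s, f i ∈ N := by
  classical
  induction s using Finset.induction_on with
  | empty => simpa using hN.1
  | insert _ _ hx ih =>
    rw [Finset.sum_insert hx]
    exact hN.2.1 _ (h _ (Finset.mem_insert_self _ _)) _
      (ih fun i hi => h i (Finset.mem_insert_of_mem hi))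

/-- Any subspace equals the coordinate subspace on its support. -/
lemma subspace_eq_coordSub
    (hd : ∃ α β lam : R, (α + β) * lam ≠ α * lam + β * lam)
    {N : Set (Fin n → R)} (hN : IsSubspace N) :
    N = coordSub ((Set.toFinite { j : Fin n | ∃ x ∈ N, x j ≠ 0 }).toFinset) := by
  classical
  ext x
  constructor
  · intro hx j hj
    rw [Set.Finite.mem_toFinset] at hj
    by_contra h
    exact hj ⟨x, hx, h⟩
  · intro hx
    have hrepr : x = ∑ j ∈ Finset.univ, ejv j (x j) := by
      funext i
      rw [Finset.sum_apply]
      simp only [ejv]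
      rw [Finset.sum_ite_eq Finset.univ i x]
      simp
    rw [hrepr]
    apply sum_mem_of_subspace hN
    intro j _
    by_cases hxj : x j = 0
    · rw [hxj, ejv_zero]; exact hN.1
    · have hj : j ∈ (Set.toFinite { j : Fin n | ∃ x ∈ N, x j ≠ 0 }).toFinset := by
        by_contra hj
        exact hxj (hx j hj)
      rw [Set.Finite.mem_toFinset] at hj
      obtain ⟨y, hy, hyj⟩ := hj
      exact axis_mem hd hN hy hyj (x j)

end Aux

/-- in a non-distributive nearfield, the number of subspaces of
`R^n` whose support has cardinality `k` is the binomial coefficient `C(n,k)`. -/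
theorem card_subspaces_support
    (hd : ∃ α β lam : R, (α + β) * lam ≠ α * lam + β * lam)
    (hn : 0 < n) (k : ℕ) (hk : k ≤ n) :
    { N : Set (Fin n → R) | IsSubspace N ∧
        ({ j : Fin n | ∃ x ∈ N, x j ≠ 0 }).ncard = k }.ncard = Nat.choose n k := by
  classical
  have key : { N : Set (Fin n → R) | IsSubspace N ∧
        ({ j : Fin n | ∃ x ∈ N, x j ≠ 0 }).ncard = k }
      = (fun T : Finset (Fin n) => (coordSub T : Set (Fin n → R))) ''
        { T : Finset (Fin n) | T.card = k } := by
    ext N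
    simp only [Set.mem_setOf_eq, Set.mem_image]
    constructor
    · rintro ⟨hN, hcard⟩
      refine ⟨(Set.toFinite { j : Fin n | ∃ x ∈ N, x j ≠ 0 }).toFinset, ?_, (subspace_eq_coordSub hd hN).symm⟩
      rw [← Set.ncard_coe_finset, Set.Finite.coe_toFinset]
      exact hcard
    · rintro ⟨T, hT, rfl⟩
      refine ⟨coordSub_isSubspace T, ?_⟩
      rw [support_coordSub, Set.ncard_coe_finset]
      exact hT
  rw [key]
  have hinj : Function.Injective (fun T : Finset (Fin n) => (coordSub T : Set (Fin n → R))) := by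
    intro T1 T2 h
    have h2 : ({ j : Fin n | ∃ x ∈ (coordSub T1 : Set (Fin n → R)), x j ≠ 0 })
        = { j : Fin n | ∃ x ∈ (coordSub T2 : Set (Fin n → R)), x j ≠ 0 } := by
      simp only at h
      rw [h]
    rw [support_coordSub, support_coordSub] at h2
    exact Finset.coe_injective h2
  rw [Set.ncard_image_of_injective _ hinj]
  have hset : { T : Finset (Fin n) | T.card = k }
      = ↑(Finset.powersetCard k (Finset.univ : Finset (Fin n))) := by
    ext T
    simp [Finset.mem_powersetCard_univ]
  rw [hset, Set.ncard_coe_finset, Finset.card_powersetCard, Finset.card_univ,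
    Fintype.card_fin]
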